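/- The marginal of the Normal-Inverse-Gamma distribution: if σ² ∼ InverseGamma(α, β) and μ | σ² ∼ N(γ, σ²/v), and y | μ, σ² ∼ N(μ, σ²), then the marginal distribution of y is a Student-t distribution St(y; γ, β(1+v)/(vα), 2α), i.e., its density is p(y) = Γ(α+1/2)/Γ(α) · √(v/(2πβ(1+v))) · (1 + v(y−γ)²/(2β(1+v)))^{−(α+1/2)}. -/

import Mathlib

open MeasureTheory Real Filter Topology

noncomputable def gaussianPdf (m s2 x : ℝ) : ℝ :=
  (Real.sqrt (2 * Real.pi * s2))⁻¹ * Real.exp (-((x - m) ^ 2) / (2 * s2))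

noncomputable def invGammaPdf (a b x : ℝ) : ℝ :=
  b ^ a / Real.Gamma a * x ^ (-a - 1) * Real.exp (-b / x)

noncomputable def studentPdf (γ v a b y : ℝ) : ℝ :=
  Real.Gamma (a + 1 / 2) / Real.Gamma a *
    Real.sqrt (v / (2 * Real.pi * b * (1 + v))) *
    (1 + v * (y - γ) ^ 2 / (2 * b * (1 + v))) ^ (-(a + 1 / 2))

/-- Outer Gamma-type integral: `∫_0^∞ s^(-a-1) exp(-c/s) ds = Γ(a) c^(-a)`. -/
lemma outer_int {a c : ℝ} (ha : 0 < a) (hc : 0 < c) :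
    ∫ s in Set.Ioi (0 : ℝ), s ^ (-a - 1) * Real.exp (-c / s)
      = Real.Gamma a * c ^ (-a) := by
  have h := integral_comp_rpow_Ioi
    (fun y : ℝ => y ^ (a - 1) * Real.exp (-(c * y))) (p := -1) (by norm_num)
  rw [Real.integral_rpow_mul_exp_neg_mul_Ioi ha hc] at h
  have heq : ∀ x ∈ Set.Ioi (0 : ℝ),
      ((|(-1 : ℝ)| * x ^ ((-1 : ℝ) - 1)) •
        ((fun y : ℝ => y ^ (a - 1) * Real.exp (-(c * y))) (x ^ (-1 : ℝ))))
        = x ^ (-a - 1) * Real.exp (-c / x) := by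
    intro x hx
    have hx0 : (0 : ℝ) < x := hx
    simp only [smul_eq_mul, abs_neg, abs_one, one_mul]
    rw [Real.rpow_neg_one, Real.inv_rpow hx0.le, ← Real.rpow_neg hx0.le,
      ← mul_assoc, ← Real.rpow_add hx0,
      show (-1 : ℝ) - 1 + -(a - 1) = -a - 1 by ring,
      show -(c * x⁻¹) = -c / x by rw [neg_div, div_eq_mul_inv]]
  rw [setIntegral_congr_fun measurableSet_Ioi heq] at h
  rw [h, one_div, Real.inv_rpow hc.le, ← Real.rpow_neg hc.le, mul_comm]

/-- Inner Gaussian integral (marginalizing `μ`). -/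
lemma inner_int (y γ v s2 : ℝ) (hv : 0 < v) (hs : 0 < s2) :
    (∫ μ : ℝ, gaussianPdf μ s2 y * gaussianPdf γ (s2 / v) μ)
      = Real.sqrt (v / (2 * Real.pi * s2 * (1 + v))) *
        Real.exp (-(v * (y - γ) ^ 2 / (2 * (1 + v))) / s2) := by
  have h1v : (0 : ℝ) < 1 + v := by linarith
  have hpi := Real.pi_pos
  set b : ℝ := (1 + v) / (2 * s2) with hb
  have hb0 : 0 < b := by positivity
  set m : ℝ := (y + v * γ) / (1 + v) with hm
  set A : ℝ := (Real.sqrt (2 * Real.pi * s2))⁻¹ with hA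
  set B : ℝ := (Real.sqrt (2 * Real.pi * (s2 / v)))⁻¹ with hB
  have hexp : ∀ μ : ℝ, -((y - μ) ^ 2) / (2 * s2) + -((μ - γ) ^ 2) / (2 * (s2 / v))
      = -(v * (y - γ) ^ 2 / (2 * (1 + v))) / s2 + -b * (μ - m) ^ 2 := by
    intro μ
    rw [hb, hm]
    field_simp
    ring
  have key : ∀ μ : ℝ, gaussianPdf μ s2 y * gaussianPdf γ (s2 / v) μ
      = (A * B * Real.exp (-(v * (y - γ) ^ 2 / (2 * (1 + v))) / s2)) *
        Real.exp (-b * (μ - m) ^ 2) := by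
    intro μ
    unfold gaussianPdf
    rw [← hA, ← hB, mul_mul_mul_comm, ← Real.exp_add, hexp μ, Real.exp_add]
    ring
  rw [integral_congr_ae (Filter.Eventually.of_forall key), integral_const_mul,
    show (∫ μ : ℝ, Real.exp (-b * (μ - m) ^ 2)) = ∫ μ : ℝ, Real.exp (-b * μ ^ 2) from
      integral_sub_right_eq_self (fun μ : ℝ => Real.exp (-b * μ ^ 2)) m,
    integral_gaussian]
  have hsqrt : A * B * Real.sqrt (π / b) = Real.sqrt (v / (2 * π * s2 * (1 + v))) := by
    rw [hA, hB, ← Real.sqrt_inv, ← Real.sqrt_inv,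
      ← Real.sqrt_mul (by positivity) ((2 * π * (s2 / v))⁻¹),
      ← Real.sqrt_mul (by positivity) (π / b)]
    congr 1
    rw [hb]
    field_simp
  rw [← hsqrt]
  ring

/-- The marginal distribution of `y` in the Normal-Inverse-Gamma hierarchical model is a
Student-t distribution `St(y; γ, β(1+v)/(vα), 2α)`. -/
theorem nig_marginal_is_student (γ v α β : ℝ) (hv : 0 < v) (hα : 0 < α) (hβ : 0 < β)
    (y : ℝ) :
    (∫ s2 in Set.Ioi (0 : ℝ), ∫ μ : ℝ,
        gaussianPdf μ s2 y * gaussianPdf γ (s2 / v) μ * invGammaPdf α β s2) =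
      studentPdf γ v α β y := by
  have h1v : (0 : ℝ) < 1 + v := by linarith
  have hpi := Real.pi_pos
  set d : ℝ := v * (y - γ) ^ 2 / (2 * (1 + v)) with hd
  have hd0 : 0 ≤ d := by positivity
  have hc : 0 < β + d := by linarith
  set K : ℝ := Real.sqrt (v / (2 * π * (1 + v))) * (β ^ α / Real.Gamma α) with hK
  have step : ∀ s2 ∈ Set.Ioi (0 : ℝ),
      (∫ μ : ℝ, gaussianPdf μ s2 y * gaussianPdf γ (s2 / v) μ * invGammaPdf α β s2)
        = K * (s2 ^ (-(α + 1 / 2) - 1) * Real.exp (-(β + d) / s2)) := by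
    intro s2 hs2
    have hs : (0 : ℝ) < s2 := hs2
    rw [MeasureTheory.integral_mul_const, inner_int y γ v s2 hv hs]
    unfold invGammaPdf
    have hsq : Real.sqrt (v / (2 * π * s2 * (1 + v)))
        = Real.sqrt (v / (2 * π * (1 + v))) * s2 ^ (-(1 / 2) : ℝ) := by
      rw [show (2:ℝ) * π * s2 * (1 + v) = 2 * π * (1 + v) * s2 by ring, ← div_div,
        div_eq_mul_inv (v / (2 * π * (1 + v))) s2,
        Real.sqrt_mul (by positivity), Real.sqrt_eq_rpow s2⁻¹,
        Real.inv_rpow hs.le, ← Real.rpow_neg hs.le]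
    rw [hsq, hK,
      show -(α + 1 / 2) - 1 = (-(1 / 2) : ℝ) + (-α - 1) by ring,
      Real.rpow_add hs,
      show -(β + d) / s2 = -(v * (y - γ) ^ 2 / (2 * (1 + v))) / s2 + -β / s2 by
        rw [← add_div, hd]; ring,
      Real.exp_add]
    ring
  rw [setIntegral_congr_fun measurableSet_Ioi step, MeasureTheory.integral_const_mul,
    outer_int (by linarith : (0:ℝ) < α + 1 / 2) hc]
  unfold studentPdf
  have hb1 : (0:ℝ) < β ^ ((α : ℝ) + 1/2) := Real.rpow_pos_of_pos hβ _
  have hg : (0:ℝ) < Real.Gamma α := Real.Gamma_pos_of_pos hα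
  rw [hK, show 1 + v * (y - γ) ^ 2 / (2 * β * (1 + v)) = (β + d) / β by
      rw [hd]; field_simp]
  rw [Real.div_rpow hc.le hβ.le, Real.rpow_neg hβ.le,
    show Real.sqrt (v / (2 * π * β * (1 + v)))
      = Real.sqrt (v / (2 * π * (1 + v))) * (β ^ ((1:ℝ)/2))⁻¹ by
      rw [show (2:ℝ) * π * β * (1 + v) = 2 * π * (1 + v) * β by ring, ← div_div,
        div_eq_mul_inv (v / (2 * π * (1 + v))) β,
        Real.sqrt_mul (by positivity), Real.sqrt_eq_rpow β⁻¹, Real.inv_rpow hβ.le,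
        ← Real.rpow_neg hβ.le, Real.rpow_neg hβ.le],
    show β ^ α = β ^ (α + 1/2) * (β ^ ((1:ℝ)/2))⁻¹ by
      rw [← Real.rpow_neg hβ.le, ← Real.rpow_add hβ]; norm_num]
  have hb2 : (0:ℝ) < β ^ ((1:ℝ)/2) := Real.rpow_pos_of_pos hβ _
  field_simp
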